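/- Let P₁, ..., Pₙ ∈ ℝ^{n×n} be nonnegative matrices such that for each i, the i-th row of Pᵢ has row sum at most γ, and for every l ≠ i the l-th row of Pᵢ equals the l-th standard basis vector e_lᵀ. Then the product P_GS = Pₙ ⋯ P₂ P₁ is a nonnegative matrix with all row sums at most γ; in particular ‖P_GS‖_∞ ≤ γ. -/

import Mathlib

theorem stmt_18 (n : ℕ) (hn : 0 < n) (γ : ℝ) (hγ0 : 0 < γ) (hγ1 : γ < 1)
    (P : Fin n → Matrix (Fin n) (Fin n) ℝ)
    (hnonneg : ∀ i l m, 0 ≤ P i l m)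
    (hrow : ∀ i : Fin n, ∑ m, P i i m ≤ γ)
    (hid : ∀ i l : Fin n, l ≠ i → ∀ m, P i l m = if l = m then 1 else 0)
    (PGS : Matrix (Fin n) (Fin n) ℝ)
    (hPGS : PGS = (List.ofFn P).reverse.prod) :
    (∀ l m, 0 ≤ PGS l m) ∧
    (∀ l, ∑ m, PGS l m ≤ γ) ∧
    (∀ v : Fin n → ℝ, ‖PGS.mulVec v‖ ≤ γ * ‖v‖) := by
  have key : ∀ k : ℕ, k ≤ n →
      (∀ l m, 0 ≤ (((List.ofFn P).take k).reverse.prod) l m) ∧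
      (∀ l : Fin n, ∑ m, (((List.ofFn P).take k).reverse.prod) l m ≤ 1) ∧
      (∀ l : Fin n, (l : ℕ) < k → ∑ m, (((List.ofFn P).take k).reverse.prod) l m ≤ γ) := by
    intro k
    induction k with
    | zero =>
      intro _
      refine ⟨?_, ?_, ?_⟩
      · intro l m
        simp [Matrix.one_apply]
        split <;> norm_num
      · intro l
        simp [Matrix.one_apply]
      · intro l hl
        exact absurd hl (Nat.not_lt_zero _)
    | succ k ih =>
      intro hk
      have hkn : k < n := hk
      obtain ⟨ih1, ih2, ih3⟩ := ih (le_of_lt hkn)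
      set i : Fin n := ⟨k, hkn⟩ with hi
      set Q := (((List.ofFn P).take k).reverse.prod) with hQ
      have htake : (List.ofFn P).take (k+1) = (List.ofFn P).take k ++ [P i] := by
        rw [List.take_succ]
        congr 1
        simp [List.getElem?_ofFn, hkn, hi]
      have hprod : (((List.ofFn P).take (k+1)).reverse.prod) = P i * Q := by
        rw [htake, List.reverse_append]
        simp [hQ]
      rw [hprod]
      have hentry : ∀ l m, (P i * Q) l m = ∑ j, P i l j * Q j m := by
        intro l m; rw [Matrix.mul_apply]
      have hnn : ∀ l m, 0 ≤ (P i * Q) l m := by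
        intro l m
        rw [hentry]
        exact Finset.sum_nonneg fun j _ => mul_nonneg (hnonneg _ _ _) (ih1 _ _)
      have hsum : ∀ l : Fin n, ∑ m, (P i * Q) l m = ∑ j, P i l j * ∑ m, Q j m := by
        intro l
        simp only [hentry]
        rw [Finset.sum_comm]
        simp [Finset.mul_sum]
      have hrow_i : ∑ m, (P i * Q) i m ≤ γ := by
        rw [hsum]
        calc ∑ j, P i i j * ∑ m, Q j m ≤ ∑ j, P i i j * 1 := by
              refine Finset.sum_le_sum fun j _ => ?_
              exact mul_le_mul_of_nonneg_left (ih2 j) (hnonneg _ _ _)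
          _ = ∑ j, P i i j := by simp
          _ ≤ γ := hrow i
      have hrow_ne : ∀ l : Fin n, l ≠ i → ∑ m, (P i * Q) l m = ∑ m, Q l m := by
        intro l hl
        rw [hsum]
        have : ∀ j, P i l j * ∑ m, Q j m = if l = j then ∑ m, Q j m else 0 := by
          intro j
          rw [hid i l hl j]
          split <;> simp
        simp only [this]
        rw [Finset.sum_ite_eq]
        simp
      refine ⟨hnn, ?_, ?_⟩
      · intro l
        by_cases hl : l = i
        · subst hl; exact le_trans hrow_i (le_of_lt hγ1)
        · rw [hrow_ne l hl]; exact ih2 l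
      · intro l hl
        by_cases hli : l = i
        · subst hli; exact hrow_i
        · have hlk : (l : ℕ) < k := by
            rcases Nat.lt_succ_iff_lt_or_eq.mp hl with h | h
            · exact h
            · exact absurd (Fin.ext h : l = i) hli
          rw [hrow_ne l hli]
          exact ih3 l hlk
  have hfull : (List.ofFn P).take n = List.ofFn P := by
    simp
  obtain ⟨h1, h2, h3⟩ := key n le_rfl
  rw [hfull] at h1 h2 h3
  subst hPGS
  have hrowγ : ∀ l, ∑ m, ((List.ofFn P).reverse.prod) l m ≤ γ := fun l => h3 l l.isLt
  refine ⟨h1, hrowγ, ?_⟩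
  intro v
  have hγv : 0 ≤ γ * ‖v‖ := mul_nonneg (le_of_lt hγ0) (norm_nonneg v)
  rw [pi_norm_le_iff_of_nonneg hγv]
  intro l
  rw [Matrix.mulVec, dotProduct]
  calc ‖∑ j, ((List.ofFn P).reverse.prod) l j * v j‖
      ≤ ∑ j, ‖((List.ofFn P).reverse.prod) l j * v j‖ := norm_sum_le _ _
    _ = ∑ j, ((List.ofFn P).reverse.prod) l j * ‖v j‖ := by
        refine Finset.sum_congr rfl fun j _ => ?_
        rw [norm_mul, Real.norm_of_nonneg (h1 l j)]
    _ ≤ ∑ j, ((List.ofFn P).reverse.prod) l j * ‖v‖ := by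
        refine Finset.sum_le_sum fun j _ => ?_
        exact mul_le_mul_of_nonneg_left (norm_le_pi_norm v j) (h1 l j)
    _ = (∑ j, ((List.ofFn P).reverse.prod) l j) * ‖v‖ := by rw [Finset.sum_mul]
    _ ≤ γ * ‖v‖ := mul_le_mul_of_nonneg_right (hrowγ l) (norm_nonneg v)
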